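/- arXiv:2509.20685 — 7 statements merged into one kernel-verified Lean document; each statement's English description precedes it below -/
import Mathlib

section
/- Let k, m be natural numbers and α : Fin m → ℕ with α i ≥ 1 for all i. On the open quadrant Q = {(x,y) ∈ (Fin k → ℝ) × (Fin m → ℝ) : y i > 0 for all i} define τ(x,y) = ∏_i (y i)^(α i), and given a C¹ function f̄ : (Fin k → ℝ) × (Fin m → ℝ) → ℝ define f = f̄/τ on Q. Suppose (p_j) is a sequence of points of Q at each of which the Fréchet derivative of f vanishes, and p_j converges to a point p = (x̄, ȳ) with ȳ i ≥ 0 for every i and ȳ i₀ = 0 for at least one index i₀. Then f̄(p) = 0, and the Fréchet derivative of f̄ at p vanishes on every vector (u,v) whose components v i vanish for all i with ȳ i = 0; that is, p is a critical point with critical value 0 of the restriction of f̄ to the boundary stratum through p. -/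
open Filter

/-- At an interior critical point of `f̄/τ`, the derivative of `f̄` satisfies the
explicit logarithmic-derivative identity. -/
theorem key_identity_corner (k m : ℕ) (α : Fin m → ℕ) (hα : ∀ i, 1 ≤ α i)
    (fbar : (Fin k → ℝ) × (Fin m → ℝ) → ℝ) (hfbar : ContDiff ℝ 1 fbar)
    (q : (Fin k → ℝ) × (Fin m → ℝ)) (hq : ∀ i, 0 < q.2 i)
    (hcrit : fderiv ℝ (fun q => fbar q / ∏ i, (q.2 i) ^ (α i)) q = 0)
    (u : Fin k → ℝ) (v : Fin m → ℝ) :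
    fderiv ℝ fbar q (u, v) = fbar q * ∑ i, (α i : ℝ) * v i / q.2 i := by
  classical
  set τ : (Fin k → ℝ) × (Fin m → ℝ) → ℝ := fun q => ∏ i, (q.2 i) ^ (α i) with hτdef
  set L : Fin m → ((Fin k → ℝ) × (Fin m → ℝ)) →L[ℝ] ℝ :=
    fun i => (ContinuousLinearMap.proj i).comp
      (ContinuousLinearMap.snd ℝ (Fin k → ℝ) (Fin m → ℝ)) with hL
  have hfac : ∀ i : Fin m, HasFDerivAt (fun q : (Fin k → ℝ) × (Fin m → ℝ) => (q.2 i) ^ (α i))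
      (((α i : ℝ) * (q.2 i) ^ (α i - 1)) • L i) q := by
    intro i
    exact (hasDerivAt_pow (α i) (q.2 i)).comp_hasFDerivAt q (L i).hasFDerivAt
  have hτ : HasFDerivAt τ
      (∑ i, (∏ j ∈ Finset.univ.erase i, (q.2 j) ^ (α j)) •
        (((α i : ℝ) * (q.2 i) ^ (α i - 1)) • L i)) q :=
    HasFDerivAt.finset_prod (fun i _ => hfac i)
  have hτpos : 0 < τ q := Finset.prod_pos fun i _ => pow_pos (hq i) _
  have hτcont : ContinuousAt τ q := hτ.continuousAt
  have hg : DifferentiableAt ℝ (fun q' => fbar q' / τ q') q := by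
    simp only [div_eq_mul_inv]
    exact (hfbar.differentiable one_ne_zero q).mul
      ((hτ.differentiableAt).inv hτpos.ne')
  have hmul : HasFDerivAt (fun q' => (fbar q' / τ q') * τ q')
      (((fbar q / τ q) • (∑ i, (∏ j ∈ Finset.univ.erase i, (q.2 j) ^ (α j)) •
        (((α i : ℝ) * (q.2 i) ^ (α i - 1)) • L i))) +
        τ q • fderiv ℝ (fun q' => fbar q' / τ q') q) q :=
    hg.hasFDerivAt.mul hτ
  have heq : (fun q' => (fbar q' / τ q') * τ q') =ᶠ[nhds q] fbar := by
    have : ∀ᶠ q' in nhds q, τ q' ≠ 0 :=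
      hτcont.eventually_ne hτpos.ne'
    filter_upwards [this] with q' hq'
    field_simp
  have hder : fderiv ℝ fbar q =
      (fbar q / τ q) • (∑ i, (∏ j ∈ Finset.univ.erase i, (q.2 j) ^ (α j)) •
        (((α i : ℝ) * (q.2 i) ^ (α i - 1)) • L i)) := by
    have := (hmul.congr_of_eventuallyEq heq.symm).fderiv
    rw [hcrit] at this
    simpa using this
  rw [hder]
  simp only [ContinuousLinearMap.smul_apply, ContinuousLinearMap.sum_apply,
    ContinuousLinearMap.coe_comp', Function.comp_apply, ContinuousLinearMap.coe_snd',
    ContinuousLinearMap.proj_apply, hL, smul_eq_mul, Finset.mul_sum]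
  refine Finset.sum_congr rfl fun i _ => ?_
  have hyi : q.2 i ≠ 0 := (hq i).ne'
  have hτsplit : τ q = q.2 i ^ (α i) * ∏ j ∈ Finset.univ.erase i, (q.2 j) ^ (α j) :=
    (Finset.mul_prod_erase Finset.univ _ (Finset.mem_univ i)).symm
  have hpow : q.2 i ^ (α i) = q.2 i * q.2 i ^ (α i - 1) := by
    conv_lhs => rw [← Nat.succ_pred_eq_of_pos (hα i)]
    rw [pow_succ']
    rfl
  have hprodne : (∏ j ∈ Finset.univ.erase i, (q.2 j) ^ (α j)) ≠ 0 :=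
    Finset.prod_ne_zero_iff.mpr fun j _ => pow_ne_zero _ (hq j).ne'
  have hpowne : q.2 i ^ (α i - 1) ≠ 0 := pow_ne_zero _ hyi
  rw [hτsplit, hpow]
  field_simp

/-- Limits of critical points of `f = f̄/τ` in a corner chart are critical points
at infinity of `f̄` (with critical value 0) for the boundary stratum. -/
theorem limit_of_critical_points_is_critical_at_infinity
    (k m : ℕ) (α : Fin m → ℕ) (hα : ∀ i, 1 ≤ α i)
    (fbar : (Fin k → ℝ) × (Fin m → ℝ) → ℝ) (hfbar : ContDiff ℝ 1 fbar)
    (pseq : ℕ → (Fin k → ℝ) × (Fin m → ℝ))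
    (hQ : ∀ j, ∀ i, 0 < (pseq j).2 i)
    (hcrit : ∀ j,
      fderiv ℝ (fun q => fbar q / ∏ i, (q.2 i) ^ (α i)) (pseq j) = 0)
    (p : (Fin k → ℝ) × (Fin m → ℝ))
    (hlim : Tendsto pseq atTop (nhds p))
    (hy : ∀ i, 0 ≤ p.2 i) (i₀ : Fin m) (hy0 : p.2 i₀ = 0) :
    fbar p = 0 ∧
      ∀ (u : Fin k → ℝ) (v : Fin m → ℝ),
        (∀ i, p.2 i = 0 → v i = 0) → fderiv ℝ fbar p (u, v) = 0 := by
  classical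
  have key : ∀ j (u : Fin k → ℝ) (v : Fin m → ℝ),
      fderiv ℝ fbar (pseq j) (u, v) =
        fbar (pseq j) * ∑ i, (α i : ℝ) * v i / (pseq j).2 i :=
    fun j u v => key_identity_corner k m α hα fbar hfbar (pseq j) (hQ j) (hcrit j) u v
  -- basic convergence facts
  have hcontf : Tendsto (fun j => fbar (pseq j)) atTop (nhds (fbar p)) :=
    ((hfbar.continuous.tendsto p).comp hlim)
  have hcontD : Tendsto (fun j => fderiv ℝ fbar (pseq j)) atTop
      (nhds (fderiv ℝ fbar p)) :=
    (((hfbar.continuous_fderiv one_ne_zero).tendsto p).comp hlim)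
  have hDw : ∀ w : (Fin k → ℝ) × (Fin m → ℝ),
      Tendsto (fun j => fderiv ℝ fbar (pseq j) w) atTop (nhds (fderiv ℝ fbar p w)) := by
    intro w
    exact ((ContinuousLinearMap.apply ℝ ℝ w).continuous.tendsto _).comp hcontD
  have hycoord : ∀ i : Fin m,
      Tendsto (fun j => (pseq j).2 i) atTop (nhds (p.2 i)) := by
    intro i
    exact (((continuous_apply i).comp continuous_snd).tendsto p).comp hlim
  -- Part 1 : fbar p = 0
  have hα₀ : (α i₀ : ℝ) ≠ 0 := Nat.cast_ne_zero.mpr (Nat.one_le_iff_ne_zero.mp (hα i₀))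
  have hfb : ∀ j, fbar (pseq j) =
      (pseq j).2 i₀ * fderiv ℝ fbar (pseq j) (0, Pi.single i₀ 1) / (α i₀ : ℝ) := by
    intro j
    have h := key j 0 (Pi.single i₀ 1)
    have hsum : (∑ i, (α i : ℝ) * (Pi.single i₀ 1 : Fin m → ℝ) i / (pseq j).2 i) =
        (α i₀ : ℝ) / (pseq j).2 i₀ := by
      rw [Finset.sum_eq_single i₀]
      · simp
      · intro b _ hb
        simp [Pi.single_apply, hb]
      · simp
    rw [hsum] at h
    have hyj : (pseq j).2 i₀ ≠ 0 := (hQ j i₀).ne'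
    field_simp at h ⊢
    linarith [h]
  have hfb0 : Tendsto (fun j => fbar (pseq j)) atTop (nhds 0) := by
    have h1 : Tendsto (fun j => (pseq j).2 i₀ *
        fderiv ℝ fbar (pseq j) (0, Pi.single i₀ 1) / (α i₀ : ℝ)) atTop
        (nhds (p.2 i₀ * fderiv ℝ fbar p (0, Pi.single i₀ 1) / (α i₀ : ℝ))) :=
      ((hycoord i₀).mul (hDw (0, Pi.single i₀ 1))).div_const _
    rw [hy0, zero_mul, zero_div] at h1
    exact h1.congr fun j => (hfb j).symm
  have hfbarp : fbar p = 0 := tendsto_nhds_unique hcontf hfb0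
  refine ⟨hfbarp, fun u v hv => ?_⟩
  -- Part 2
  set S : ℕ → ℝ := fun j => ∑ i, (α i : ℝ) * v i / (pseq j).2 i with hS
  have hSlim : Tendsto S atTop (nhds (∑ i, (α i : ℝ) * v i / p.2 i)) := by
    apply tendsto_finset_sum
    intro i _
    by_cases hpi : p.2 i = 0
    · have hvi : v i = 0 := hv i hpi
      simp only [hvi, mul_zero, zero_div]
      exact tendsto_const_nhds
    · exact tendsto_const_nhds.div (hycoord i) hpi
  have hlim2 : Tendsto (fun j => fbar (pseq j) * S j) atTop (nhds 0) := by
    have := hcontf.mul hSlim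
    rw [hfbarp, zero_mul] at this
    exact this
  have hlim1 : Tendsto (fun j => fderiv ℝ fbar (pseq j) (u, v)) atTop (nhds 0) :=
    hlim2.congr fun j => (key j u v).symm
  exact tendsto_nhds_unique (hDw (u, v)) hlim1
end

section
/- Let k, m be natural numbers and α : Fin m → ℕ with α i ≥ 1 for all i. On the open quadrant Q = {(x,y) ∈ (Fin k → ℝ) × (Fin m → ℝ) : y i > 0 for all i} let f̄ : (Fin k → ℝ) × (Fin m → ℝ) → ℝ be C¹. Suppose (p_j) is a sequence in Q converging to a point p = (x̄, ȳ) with ȳ i ≥ 0 for every i and ȳ i₀ = 0 for at least one index i₀, and suppose that along the sequence the logarithmic components of τ·d(f̄/τ) tend to zero, namely: ∂f̄/∂x_a(p_j) → 0 for every a ∈ Fin k, and (y i)(p_j)·(∂f̄/∂y_i)(p_j) − (α i)·f̄(p_j) → 0 for every i ∈ Fin m. Then f̄(p) = 0 and the Fréchet derivative of f̄ at p vanishes on every vector (u,v) whose components v i vanish for all i with ȳ i = 0; that is, p is a critical point with critical value 0 of the restriction of f̄ to the boundary stratum through p. -/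
open Filter

/-- If the logarithmic components of `τ·d(f̄/τ)` tend to zero along a sequence in
the open quadrant converging to a boundary point, the limit is a critical point
at infinity of `f̄` with critical value 0. -/
theorem limit_of_palais_smale_sequence_is_critical_at_infinity
    (k m : ℕ) (α : Fin m → ℕ) (hα : ∀ i, 1 ≤ α i)
    (fbar : (Fin k → ℝ) × (Fin m → ℝ) → ℝ) (hfbar : ContDiff ℝ 1 fbar)
    (pseq : ℕ → (Fin k → ℝ) × (Fin m → ℝ))
    (hQ : ∀ j, ∀ i, 0 < (pseq j).2 i)
    (hx : ∀ a : Fin k,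
      Tendsto (fun j => fderiv ℝ fbar (pseq j) (Pi.single a 1, 0)) atTop (nhds 0))
    (hyi : ∀ i : Fin m,
      Tendsto (fun j =>
          (pseq j).2 i * fderiv ℝ fbar (pseq j) (0, Pi.single i 1)
            - (α i : ℝ) * fbar (pseq j)) atTop (nhds 0))
    (p : (Fin k → ℝ) × (Fin m → ℝ))
    (hlim : Tendsto pseq atTop (nhds p))
    (hy : ∀ i, 0 ≤ p.2 i) (i₀ : Fin m) (hy0 : p.2 i₀ = 0) :
    fbar p = 0 ∧
      ∀ (u : Fin k → ℝ) (v : Fin m → ℝ),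
        (∀ i, p.2 i = 0 → v i = 0) → fderiv ℝ fbar p (u, v) = 0 := by
  have hD : Continuous (fderiv ℝ fbar) := hfbar.continuous_fderiv one_ne_zero
  have hDlim : Tendsto (fun j => fderiv ℝ fbar (pseq j)) atTop
      (nhds (fderiv ℝ fbar p)) := (hD.tendsto p).comp hlim
  have heval : ∀ w : (Fin k → ℝ) × (Fin m → ℝ),
      Tendsto (fun j => fderiv ℝ fbar (pseq j) w) atTop (nhds (fderiv ℝ fbar p w)) := by
    intro w
    exact ((ContinuousLinearMap.apply ℝ ℝ w).continuous.tendsto _).comp hDlim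
  have hfb : Tendsto (fun j => fbar (pseq j)) atTop (nhds (fbar p)) :=
    (hfbar.continuous.tendsto p).comp hlim
  have hy2 : ∀ i, Tendsto (fun j => (pseq j).2 i) atTop (nhds (p.2 i)) := by
    intro i
    exact (((continuous_apply i).comp continuous_snd).tendsto p).comp hlim
  have hx0 : ∀ a, fderiv ℝ fbar p (Pi.single a 1, 0) = 0 :=
    fun a => tendsto_nhds_unique (heval _) (hx a)
  have key : ∀ i, p.2 i * fderiv ℝ fbar p (0, Pi.single i 1) - (α i : ℝ) * fbar p = 0 := by
    intro i
    exact tendsto_nhds_unique (((hy2 i).mul (heval _)).sub (tendsto_const_nhds.mul hfb))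
      (hyi i)
  have hf0 : fbar p = 0 := by
    have := key i₀
    rw [hy0] at this
    have hα0 : (α i₀ : ℝ) ≠ 0 := Nat.cast_ne_zero.mpr (Nat.one_le_iff_ne_zero.mp (hα i₀))
    have : (α i₀ : ℝ) * fbar p = 0 := by linarith
    exact (mul_eq_zero.mp this).resolve_left hα0
  refine ⟨hf0, fun u v hv => ?_⟩
  have hyd : ∀ i, 0 < p.2 i → fderiv ℝ fbar p (0, Pi.single i 1) = 0 := by
    intro i hi
    have := key i
    rw [hf0, mul_zero, sub_zero] at this
    exact (mul_eq_zero.mp this).resolve_left hi.ne'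
  have hdecomp : (u, v) = (∑ a, (u a) • ((Pi.single a 1, 0) : (Fin k → ℝ) × (Fin m → ℝ)))
      + ∑ i, (v i) • ((0, Pi.single i 1) : (Fin k → ℝ) × (Fin m → ℝ)) := by
    ext j
    · simp [Prod.fst_sum, Prod.snd_sum, Finset.sum_apply, Pi.single_apply, mul_ite,
        Finset.sum_ite_eq', mul_comm]
    · simp [Prod.fst_sum, Prod.snd_sum, Finset.sum_apply, Pi.single_apply, mul_ite,
        Finset.sum_ite_eq', mul_comm]
  rw [hdecomp, map_add, map_sum, map_sum]
  have h1 : ∀ a ∈ Finset.univ, fderiv ℝ fbar p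
      ((u a) • ((Pi.single a 1, 0) : (Fin k → ℝ) × (Fin m → ℝ))) = 0 := by
    intro a _
    rw [map_smul, hx0 a, smul_zero]
  have h2 : ∀ i ∈ Finset.univ, fderiv ℝ fbar p
      ((v i) • ((0, Pi.single i 1) : (Fin k → ℝ) × (Fin m → ℝ))) = 0 := by
    intro i _
    rcases eq_or_lt_of_le (hy i) with h | h
    · rw [hv i h.symm, zero_smul, map_zero]
    · rw [map_smul, hyd i h, smul_zero]
  rw [Finset.sum_congr rfl h1, Finset.sum_congr rfl h2]
  simp
end

section
/- Let E be a real Hilbert space and f : ℝ × E → ℝ a C¹ function. For s ∈ ℝ write ∇f_s for the gradient of the function f(s,·) : E → ℝ, and write ∂_s f(s,x) for the derivative of the function t ↦ f(t,x) at t = s. Let x : ℝ → E be a C¹ curve with derivative x'. Then for all real numbers s₁ ≤ s₂ one has the energy identity ∫_{s₁}^{s₂} ( ‖x'(s)‖² + ‖∇f_s(x(s))‖² − 2·∂_s f(s, x(s)) ) ds = 2·( f(s₁, x(s₁)) − f(s₂, x(s₂)) ) + ∫_{s₁}^{s₂} ‖ x'(s) + ∇f_s(x(s)) ‖² ds. 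-/
open MeasureTheory

/-- The finite-interval energy identity: the analytic energy of a curve equals the
topological energy plus the `L²` defect of the time-dependent negative gradient
flow equation. -/
theorem energy_identity
    {E : Type*} [NormedAddCommGroup E] [InnerProductSpace ℝ E] [CompleteSpace E]
    (f : ℝ × E → ℝ) (hf : ContDiff ℝ 1 f)
    (x : ℝ → E) (x' : ℝ → E)
    (hx : ∀ s, HasDerivAt x (x' s) s) (hx' : Continuous x')
    (s₁ s₂ : ℝ) (hs : s₁ ≤ s₂) :
    ∫ s in s₁..s₂,
        (‖x' s‖ ^ 2 + ‖gradient (fun y => f (s, y)) (x s)‖ ^ 2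
          - 2 * deriv (fun t => f (t, x s)) s)
      = 2 * (f (s₁, x s₁) - f (s₂, x s₂))
        + ∫ s in s₁..s₂, ‖x' s + gradient (fun y => f (s, y)) (x s)‖ ^ 2 := by
  have hxc : Continuous x := by
    rw [continuous_iff_continuousAt]; exact fun s => (hx s).continuousAt
  set D : ℝ → (ℝ × E) →L[ℝ] ℝ := fun s => fderiv ℝ f (s, x s) with hDdef
  have hfd : ∀ p : ℝ × E, HasFDerivAt f (fderiv ℝ f p) p := fun p =>
    (hf.differentiable one_ne_zero p).hasFDerivAt
  have hDcont : Continuous D :=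
    (hf.continuous_fderiv one_ne_zero).comp (continuous_id.prodMk hxc)
  set G : ℝ → E := fun s =>
    (InnerProductSpace.toDual ℝ E).symm ((D s).comp (ContinuousLinearMap.inr ℝ ℝ E)) with hGdef
  -- the gradient is G
  have hgrad : ∀ s, gradient (fun y => f (s, y)) (x s) = G s := by
    intro s
    have hcomp : HasFDerivAt (fun y : E => f (s, y))
        ((D s).comp (ContinuousLinearMap.inr ℝ ℝ E)) (x s) := by
      exact (hfd (s, x s)).comp (x s) (hasFDerivAt_prodMk_right s (x s))
    exact ((hasFDerivAt_iff_hasGradientAt).mp hcomp).gradient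
  -- the partial time derivative
  have hpart : ∀ s, HasDerivAt (fun t => f (t, x s)) (D s (1, 0)) s := by
    intro s
    have h1 : HasDerivAt (fun t : ℝ => ((t : ℝ), x s)) ((1 : ℝ), (0 : E)) s :=
      (hasDerivAt_id s).prodMk (hasDerivAt_const s (x s))
    exact (hfd (s, x s)).comp_hasDerivAt s h1
  -- the chain rule for s ↦ f (s, x s)
  have hchain : ∀ s, HasDerivAt (fun t => f (t, x t)) (D s (1, x' s)) s := by
    intro s
    have h1 : HasDerivAt (fun t : ℝ => ((t : ℝ), x t)) ((1 : ℝ), x' s) s :=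
      (hasDerivAt_id s).prodMk (hx s)
    exact (hfd (s, x s)).comp_hasDerivAt s h1
  have hGcont : Continuous G := by
    apply (InnerProductSpace.toDual ℝ E).symm.continuous.comp
    exact ((ContinuousLinearMap.compL ℝ E (ℝ × E) ℝ).continuous.comp
      hDcont).clm_apply continuous_const
  have hinner : ∀ s, inner ℝ (G s) (x' s) = D s (0, x' s) := by
    intro s
    simp [hGdef, InnerProductSpace.toDual_symm_apply]
  -- pointwise identity of integrands
  have hpt : ∀ s, ‖x' s‖ ^ 2 + ‖G s‖ ^ 2 - 2 * D s (1, 0)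
      = (-2) * D s (1, x' s) + ‖x' s + G s‖ ^ 2 := by
    intro s
    have hsplit : D s (1, x' s) = D s (1, 0) + D s (0, x' s) := by
      rw [← map_add]; norm_num
    have hexp : ‖x' s + G s‖ ^ 2
        = ‖x' s‖ ^ 2 + 2 * inner ℝ (x' s) (G s) + ‖G s‖ ^ 2 :=
      norm_add_sq_real (x' s) (G s)
    have hi : (inner ℝ (x' s) (G s) : ℝ) = D s (0, x' s) := by
      rw [real_inner_comm]; exact hinner s
    rw [hexp, hsplit, hi]; ring
  -- FTC
  have hcont1 : Continuous fun s => D s (1, x' s) :=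
    hDcont.clm_apply (continuous_const.prodMk hx')
  have hftc : ∫ s in s₁..s₂, D s (1, x' s) = f (s₂, x s₂) - f (s₁, x s₁) :=
    intervalIntegral.integral_eq_sub_of_hasDerivAt (fun t _ => hchain t)
      (hcont1.intervalIntegrable s₁ s₂)
  have hcont2 : Continuous fun s => ‖x' s + G s‖ ^ 2 :=
    ((hx'.add hGcont).norm.pow 2)
  calc ∫ s in s₁..s₂,
        (‖x' s‖ ^ 2 + ‖gradient (fun y => f (s, y)) (x s)‖ ^ 2
          - 2 * deriv (fun t => f (t, x s)) s)
      = ∫ s in s₁..s₂, ((-2) * D s (1, x' s) + ‖x' s + G s‖ ^ 2) := by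
        apply intervalIntegral.integral_congr
        intro s _
        beta_reduce
        rw [hgrad s, (hpart s).deriv]
        exact hpt s
    _ = (∫ s in s₁..s₂, (-2) * D s (1, x' s)) + ∫ s in s₁..s₂, ‖x' s + G s‖ ^ 2 :=
        intervalIntegral.integral_add
          ((continuous_const.mul hcont1).intervalIntegrable s₁ s₂)
          (hcont2.intervalIntegrable s₁ s₂)
    _ = 2 * (f (s₁, x s₁) - f (s₂, x s₂))
        + ∫ s in s₁..s₂, ‖x' s + gradient (fun y => f (s, y)) (x s)‖ ^ 2 := by
        rw [intervalIntegral.integral_const_mul, hftc]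
        congr 1
        · ring
        · apply intervalIntegral.integral_congr
          intro s _
          beta_reduce
          rw [hgrad s]
end

section
/- Let E be a real Hilbert space and f : ℝ × E → ℝ a C¹ function. Write ∇f_s for the gradient of f(s,·) and ∂_s f for the partial derivative in the first variable. Suppose there is R > 0 such that f(s,·) = f(−R,·) for all s ≤ −R and f(s,·) = f(R,·) for all s ≥ R. Let x : ℝ → E be a C¹ curve solving the time-dependent negative gradient flow x'(s) = −∇f_s(x(s)) for all s, such that x(s) converges to a point x₋ as s → −∞ and to a point x₊ as s → +∞, and such that s ↦ ‖x'(s)‖² and s ↦ ∂_s f(s, x(s)) are integrable on ℝ. Then ∫_ℝ ( ‖x'(s)‖² + ‖∇f_s(x(s))‖² − 2·∂_s f(s, x(s)) ) ds = 2·( f(−R, x₋) − f(R, x₊) ). -/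
open Filter MeasureTheory

/-- For a solution of the time-dependent negative gradient flow converging to
limits at both ends (with the time-dependence constant outside `[-R,R]`), the
analytic energy equals the topological energy
`2·(f(−R, x₋) − f(R, x₊))`. -/
theorem analytic_energy_eq_topological_energy
    {E : Type*} [NormedAddCommGroup E] [InnerProductSpace ℝ E] [CompleteSpace E]
    (f : ℝ × E → ℝ) (hf : ContDiff ℝ 1 f)
    (R : ℝ) (hR : 0 < R)
    (hleft : ∀ s ≤ -R, ∀ y : E, f (s, y) = f (-R, y))
    (hright : ∀ s ≥ R, ∀ y : E, f (s, y) = f (R, y))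
    (x : ℝ → E) (x' : ℝ → E)
    (hx : ∀ s, HasDerivAt x (x' s) s)
    (hflow : ∀ s, x' s = -gradient (fun y => f (s, y)) (x s))
    (xm xp : E)
    (hxm : Tendsto x atBot (nhds xm))
    (hxp : Tendsto x atTop (nhds xp))
    (hint1 : Integrable (fun s => ‖x' s‖ ^ 2))
    (hint2 : Integrable (fun s => deriv (fun t => f (t, x s)) s)) :
    ∫ s, (‖x' s‖ ^ 2 + ‖gradient (fun y => f (s, y)) (x s)‖ ^ 2
        - 2 * deriv (fun t => f (t, x s)) s)
      = 2 * (f (-R, xm) - f (R, xp)) := by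
  set g : ℝ → ℝ := fun s => f (s, x s) with hg
  set g' : ℝ → ℝ := fun s => deriv (fun t => f (t, x s)) s - ‖x' s‖ ^ 2 with hg'
  -- the key derivative computation
  have hgrad : ∀ s, gradient (fun y => f (s, y)) (x s) = -x' s := by
    intro s
    rw [hflow s, neg_neg]
  have hderiv : ∀ s, HasDerivAt g (g' s) s := by
    intro s
    have hD : HasFDerivAt f (fderiv ℝ f (s, x s)) (s, x s) :=
      (hf.differentiable one_ne_zero (s, x s)).hasFDerivAt
    set D := fderiv ℝ f (s, x s) with hDdef
    -- derivative of the full composition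
    have hc : HasDerivAt (fun t => ((t, x t) : ℝ × E)) (1, x' s) s :=
      (hasDerivAt_id s).prodMk (hx s)
    have hgd : HasDerivAt g (D (1, x' s)) s := hD.comp_hasDerivAt s hc
    -- partial derivative in the first variable
    have hpt : HasDerivAt (fun t => f (t, x s)) (D (1, 0)) s :=
      hD.comp_hasDerivAt s ((hasDerivAt_id s).prodMk (hasDerivAt_const s (x s)))
    -- partial derivative in the second variable, as a gradient
    have hpy : HasFDerivAt (fun y => f (s, y))
        (D.comp ((0 : E →L[ℝ] ℝ).prod (ContinuousLinearMap.id ℝ E))) (x s) := by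
      have : HasFDerivAt (fun y => ((s, y) : ℝ × E))
          ((0 : E →L[ℝ] ℝ).prod (ContinuousLinearMap.id ℝ E)) (x s) :=
        (hasFDerivAt_const s (x s)).prodMk (hasFDerivAt_id (x s))
      exact hD.comp (x s) this
    have hgr := hpy.hasGradientAt.gradient
    have hinner : ∀ v : E, inner ℝ (gradient (fun y => f (s, y)) (x s)) v = D (0, v) := by
      intro v
      rw [hgr]
      simpa using InnerProductSpace.toDual_symm_apply (𝕜 := ℝ) (E := E)
    have hsplit : D (1, x' s) = D (1, 0) + D (0, x' s) := by
      rw [← map_add]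
      norm_num
    have hDy : D (0, x' s) = -‖x' s‖ ^ 2 := by
      rw [← hinner (x' s), hgrad s, inner_neg_left, real_inner_self_eq_norm_sq]
    have : g' s = D (1, x' s) := by
      show deriv (fun t => f (t, x s)) s - ‖x' s‖ ^ 2 = _
      rw [hsplit, hpt.deriv, hDy]
      ring
    rw [this]
    exact hgd
  -- limits of g at ±∞
  have hcontR : Continuous fun y : E => f (R, y) :=
    hf.continuous.comp (continuous_const.prodMk continuous_id)
  have hcontL : Continuous fun y : E => f (-R, y) :=
    hf.continuous.comp (continuous_const.prodMk continuous_id)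
  have htop : Tendsto g atTop (nhds (f (R, xp))) := by
    have h1 : Tendsto (fun s => f (R, x s)) atTop (nhds (f (R, xp))) :=
      (hcontR.continuousAt.tendsto).comp hxp
    refine h1.congr' ?_
    filter_upwards [eventually_ge_atTop R] with s hs
    exact (hright s hs (x s)).symm
  have hbot : Tendsto g atBot (nhds (f (-R, xm))) := by
    have h1 : Tendsto (fun s => f (-R, x s)) atBot (nhds (f (-R, xm))) :=
      (hcontL.continuousAt.tendsto).comp hxm
    refine h1.congr' ?_
    filter_upwards [eventually_le_atBot (-R)] with s hs
    exact (hleft s hs (x s)).symm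
  have hint : Integrable g' := hint2.sub hint1
  have hFTC : ∫ s, g' s = f (R, xp) - f (-R, xm) :=
    MeasureTheory.integral_of_hasDerivAt_of_tendsto hderiv hint hbot htop
  -- rewrite the integrand
  have hintegrand : ∀ s, (‖x' s‖ ^ 2 + ‖gradient (fun y => f (s, y)) (x s)‖ ^ 2
      - 2 * deriv (fun t => f (t, x s)) s) = -2 * g' s := by
    intro s
    rw [hgrad s, norm_neg, hg']
    ring
  calc ∫ s, (‖x' s‖ ^ 2 + ‖gradient (fun y => f (s, y)) (x s)‖ ^ 2
        - 2 * deriv (fun t => f (t, x s)) s)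
      = ∫ s, -2 * g' s := by simp_rw [hintegrand]
    _ = -2 * ∫ s, g' s := by rw [integral_const_mul]
    _ = 2 * (f (-R, xm) - f (R, xp)) := by rw [hFTC]; ring
end

section
/- Let E be a real Hilbert space, f : ℝ × E → ℝ a C¹ function, and b ∈ ℝ, σ > 0. Write ∇f_s for the gradient of f(s,·) and ∂_s f for the partial derivative in the first variable. Assume the strip estimate: for every s ∈ ℝ and every x ∈ E with b + σ/2 ≤ f(s,x) ≤ b + σ one has ‖∇f_s(x)‖² ≥ 2·∂_s f(s,x). Let x : ℝ → E be a C¹ curve solving the time-dependent negative gradient flow x'(s) = −∇f_s(x(s)) for all s, and suppose f(s₀, x(s₀)) < b + σ/2 for some s₀ ∈ ℝ. Then f(s, x(s)) ≤ b + σ for every s ≥ s₀. -/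
/-- No-crossing lemma (upper bound): under the strip estimate
`‖∇f_s‖² ≥ 2·∂_s f` on `{b + σ/2 ≤ f_s ≤ b + σ}`, a negative gradient flow line
starting with action below `b + σ/2` never exceeds action `b + σ`. -/
theorem no_crossing_upper
    {E : Type*} [NormedAddCommGroup E] [InnerProductSpace ℝ E] [CompleteSpace E]
    (f : ℝ × E → ℝ) (hf : ContDiff ℝ 1 f)
    (b σ : ℝ) (hσ : 0 < σ)
    (hstrip : ∀ s : ℝ, ∀ y : E, b + σ / 2 ≤ f (s, y) → f (s, y) ≤ b + σ →
      ‖gradient (fun z => f (s, z)) y‖ ^ 2 ≥ 2 * deriv (fun t => f (t, y)) s)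
    (x : ℝ → E)
    (hx : ∀ s, HasDerivAt x (-gradient (fun z => f (s, z)) (x s)) s)
    (s₀ : ℝ) (h₀ : f (s₀, x s₀) < b + σ / 2) :
    ∀ s ≥ s₀, f (s, x s) ≤ b + σ := by
  set g : ℝ → ℝ := fun s => f (s, x s) with hg
  have hfd : Differentiable ℝ f := hf.differentiable one_ne_zero
  -- derivative of g
  have hgd : ∀ s, HasDerivAt g
      (deriv (fun t => f (t, x s)) s - ‖gradient (fun z => f (s, z)) (x s)‖ ^ 2) s := by
    intro s
    set G := gradient (fun z => f (s, z)) (x s) with hG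
    have hcurve : HasDerivAt (fun t => ((t, x t) : ℝ × E)) (1, -G) s :=
      HasDerivAt.prodMk (hasDerivAt_id s) (hx s)
    have hFf : HasFDerivAt f (fderiv ℝ f (s, x s)) (s, x s) :=
      (hfd (s, x s)).hasFDerivAt
    have hcomp : HasDerivAt g (fderiv ℝ f (s, x s) (1, -G)) s :=
      hFf.comp_hasDerivAt s hcurve
    -- partial in s
    have hpart : HasDerivAt (fun t => f (t, x s)) (fderiv ℝ f (s, x s) (1, 0)) s := by
      have hcurve2 : HasDerivAt (fun t => ((t, x s) : ℝ × E)) (1, 0) s :=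
        HasDerivAt.prodMk (hasDerivAt_id s) (hasDerivAt_const s (x s))
      exact hFf.comp_hasDerivAt s hcurve2
    have hpd : deriv (fun t => f (t, x s)) s = fderiv ℝ f (s, x s) (1, 0) := hpart.deriv
    -- gradient part
    have hspace : HasFDerivAt (fun z => f (s, z))
        ((fderiv ℝ f (s, x s)).comp (ContinuousLinearMap.inr ℝ ℝ E)) (x s) := by
      have hc : HasFDerivAt (fun z : E => ((s, z) : ℝ × E))
          (ContinuousLinearMap.inr ℝ ℝ E) (x s) := by
        have h := HasFDerivAt.prodMk (hasFDerivAt_const (𝕜 := ℝ) s (x s)) (hasFDerivAt_id (x s))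
        convert h using 1 <;> rfl
      exact hFf.comp (x s) hc
    have hinner : ∀ v : E, inner ℝ G v = fderiv ℝ f (s, x s) (0, v) := by
      intro v
      have : gradient (fun z => f (s, z)) (x s) =
          (InnerProductSpace.toDual ℝ E).symm (fderiv ℝ (fun z => f (s, z)) (x s)) := rfl
      rw [hG, this, InnerProductSpace.toDual_symm_apply (𝕜 := ℝ), hspace.fderiv]
      rfl
    have key : fderiv ℝ f (s, x s) (1, -G)
        = fderiv ℝ f (s, x s) (1, 0) + fderiv ℝ f (s, x s) (0, -G) := by
      rw [← ContinuousLinearMap.map_add]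
      norm_num
    have h2 : fderiv ℝ f (s, x s) (0, -G) = -‖G‖ ^ 2 := by
      rw [← hinner (-G), inner_neg_right, real_inner_self_eq_norm_sq]
    rw [hpd]
    have := hcomp
    rwa [key, h2] at this
  have hgc : Continuous g := by
    have : Differentiable ℝ g := fun s => (hgd s).differentiableAt
    exact this.continuous
  -- main argument
  intro s₁ hs₁
  by_contra hlt
  push_neg at hlt
  set c := b + σ / 2 with hc
  set C := b + σ with hC
  have hcC : c < C := by rw [hc, hC]; linarith
  -- t = last time in [s₀, s₁] with g ≤ c
  have hs01 : s₀ ≤ s₁ := hs₁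
  set T := {s | s ∈ Set.Icc s₀ s₁ ∧ g s ≤ c} with hT
  have hTne : T.Nonempty := ⟨s₀, ⟨le_rfl, hs01⟩, h₀.le⟩
  have hTbdd : BddAbove T := ⟨s₁, fun s hs => hs.1.2⟩
  have hTclosed : IsClosed T := by
    have : T = Set.Icc s₀ s₁ ∩ g ⁻¹' Set.Iic c := by
      ext s; simp [hT, Set.mem_Icc, and_assoc]
    rw [this]
    exact isClosed_Icc.inter (isClosed_Iic.preimage hgc)
  set t := sSup T with ht
  have htT : t ∈ T := hTclosed.csSup_mem hTne hTbdd
  have htc : g t ≤ c := htT.2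
  have hts : t ∈ Set.Icc s₀ s₁ := htT.1
  have hgt : ∀ s, t < s → s ≤ s₁ → c < g s := by
    intro s h1 h2
    by_contra h
    push_neg at h
    exact absurd (le_csSup hTbdd ⟨⟨hts.1.trans h1.le, h2⟩, h⟩) (not_le.2 h1)
  have hts1 : t ≤ s₁ := hts.2
  -- u = first time in [t, s₁] with g ≥ C
  set U := {s | s ∈ Set.Icc t s₁ ∧ C ≤ g s} with hU
  have hUne : U.Nonempty := ⟨s₁, ⟨hts1, le_rfl⟩, hlt.le⟩
  have hUbdd : BddBelow U := ⟨t, fun s hs => hs.1.1⟩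
  have hUclosed : IsClosed U := by
    have : U = Set.Icc t s₁ ∩ g ⁻¹' Set.Ici C := by
      ext s; simp [hU, Set.mem_Icc, and_assoc]
    rw [this]
    exact isClosed_Icc.inter (isClosed_Ici.preimage hgc)
  set u := sInf U with hu
  have huU : u ∈ U := hUclosed.csInf_mem hUne hUbdd
  have huC : C ≤ g u := huU.2
  have htu : t < u := lt_of_le_of_ne huU.1.1 (fun h =>
    absurd huC (not_le.2 (h ▸ htc.trans_lt hcC)))
  have hus1 : u ≤ s₁ := huU.1.2
  have hltC : ∀ s, t ≤ s → s < u → g s < C := by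
    intro s h1 h2
    by_contra h
    push_neg at h
    exact absurd (csInf_le hUbdd ⟨⟨h1, h2.le.trans hus1⟩, h⟩) (not_le.2 h2)
  -- on (t, u), c < g < C, hence deriv g ≤ 0, so g antitone on [t, u]
  have hanti : AntitoneOn g (Set.Icc t u) := by
    apply antitoneOn_of_deriv_nonpos (convex_Icc t u) (hgc.continuousOn)
    · intro s hs
      exact ((hgd s).differentiableAt).differentiableWithinAt
    · intro s hs
      rw [interior_Icc] at hs
      have hgs1 : c < g s := hgt s hs.1 (hs.2.le.trans hus1)
      have hgs2 : g s < C := hltC s hs.1.le hs.2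
      have hkey := hstrip s (x s) hgs1.le hgs2.le
      rw [(hgd s).deriv]
      nlinarith [sq_nonneg ‖gradient (fun z => f (s, z)) (x s)‖]
  have := hanti ⟨le_rfl, htu.le⟩ ⟨htu.le, le_rfl⟩ htu.le
  have : C ≤ c := huC.trans (this.trans htc)
  exact absurd this (not_le.2 hcC)
end

section
/- Let E be a real Hilbert space, f : ℝ × E → ℝ a C¹ function, and a ∈ ℝ, σ > 0. Write ∇f_s for the gradient of f(s,·) and ∂_s f for the partial derivative in the first variable. Assume the strip estimate: for every s ∈ ℝ and every x ∈ E with a − σ ≤ f(s,x) ≤ a − σ/2 one has ‖∇f_s(x)‖² ≥ 2·∂_s f(s,x). Let x : ℝ → E be a C¹ curve solving the time-dependent negative gradient flow x'(s) = −∇f_s(x(s)) for all s, and suppose f(s₀, x(s₀)) > a − σ/2 for some s₀ ∈ ℝ. Then f(s, x(s)) ≥ a − σ for every s ≤ s₀. -/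
open scoped RealInnerProductSpace

/-- No-crossing lemma (lower bound): under the strip estimate
`‖∇f_s‖² ≥ 2·∂_s f` on `{a − σ ≤ f_s ≤ a − σ/2}`, a negative gradient flow line
ending with action above `a − σ/2` never had action below `a − σ`. -/
theorem no_crossing_lower
    {E : Type*} [NormedAddCommGroup E] [InnerProductSpace ℝ E] [CompleteSpace E]
    (f : ℝ × E → ℝ) (hf : ContDiff ℝ 1 f)
    (a σ : ℝ) (hσ : 0 < σ)
    (hstrip : ∀ s : ℝ, ∀ y : E, a - σ ≤ f (s, y) → f (s, y) ≤ a - σ / 2 →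
      ‖gradient (fun z => f (s, z)) y‖ ^ 2 ≥ 2 * deriv (fun t => f (t, y)) s)
    (x : ℝ → E)
    (hx : ∀ s, HasDerivAt x (-gradient (fun z => f (s, z)) (x s)) s)
    (s₀ : ℝ) (h₀ : f (s₀, x s₀) > a - σ / 2) :
    ∀ s ≤ s₀, f (s, x s) ≥ a - σ := by
  have hfd : Differentiable ℝ f := hf.differentiable one_ne_zero
  set g : ℝ → ℝ := fun s => f (s, x s) with hg_def
  -- derivative of g along the flow
  have key : ∀ s, HasDerivAt g (deriv (fun t => f (t, x s)) s
      - ‖gradient (fun z => f (s, z)) (x s)‖ ^ 2) s := by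
    intro s
    set y := x s with hy
    set G := gradient (fun z => f (s, z)) y with hG
    have hF : HasFDerivAt f (fderiv ℝ f (s, y)) (s, y) := (hfd _).hasFDerivAt
    have hp : HasDerivAt (fun t => (t, x t)) ((1 : ℝ), -G) s :=
      (hasDerivAt_id s).prodMk (hx s)
    have hcomp : HasDerivAt g (fderiv ℝ f (s, y) (1, -G)) s :=
      hF.comp_hasDerivAt s hp
    have h1 : HasDerivAt (fun t => f (t, y)) (fderiv ℝ f (s, y) (1, 0)) s := by
      have hq : HasDerivAt (fun t : ℝ => (t, y)) ((1 : ℝ), (0 : E)) s :=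
        (hasDerivAt_id s).prodMk (hasDerivAt_const s y)
      exact hF.comp_hasDerivAt s hq
    have h2 : HasFDerivAt (fun z : E => f (s, z))
        ((fderiv ℝ f (s, y)).comp (ContinuousLinearMap.inr ℝ ℝ E)) y := by
      have hq : HasFDerivAt (fun z : E => ((s : ℝ), z))
          (ContinuousLinearMap.inr ℝ ℝ E) y := hasFDerivAt_prodMk_right s y
      exact hF.comp y hq
    have hgrad : HasGradientAt (fun z : E => f (s, z)) G y :=
      h2.differentiableAt.hasGradientAt
    have hinner : fderiv ℝ f (s, y) ((0 : ℝ), -G) = (inner ℝ G (-G) : ℝ) := by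
      have heq := h2.unique hgrad.hasFDerivAt
      have := congrArg (fun L : E →L[ℝ] ℝ => L (-G)) heq
      simpa [ContinuousLinearMap.comp_apply, ContinuousLinearMap.inr_apply,
        InnerProductSpace.toDual_apply_apply] using this
    have hsplit : fderiv ℝ f (s, y) (1, -G)
        = fderiv ℝ f (s, y) (1, 0) + fderiv ℝ f (s, y) ((0 : ℝ), -G) := by
      rw [← map_add]
      norm_num
    have hder : deriv (fun t => f (t, y)) s = fderiv ℝ f (s, y) (1, 0) := h1.deriv
    rw [hsplit, hinner] at hcomp
    have hnorm : (inner ℝ G (-G) : ℝ) = -‖G‖ ^ 2 := by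
      rw [inner_neg_right, real_inner_self_eq_norm_sq]
    rw [hnorm] at hcomp
    rw [hder]
    simpa [sub_eq_add_neg] using hcomp
  have hgdiff : ∀ s, DifferentiableAt ℝ g s := fun s => (key s).differentiableAt
  have hgc : Continuous g :=
    continuous_iff_continuousAt.mpr fun s => (hgdiff s).continuousAt
  -- on the strip, deriv g ≤ 0
  have hderiv_nonpos : ∀ s, a - σ ≤ g s → g s ≤ a - σ / 2 → deriv g s ≤ 0 := by
    intro s h1 h2
    have hd := (key s).deriv
    have hs := hstrip s (x s) h1 h2
    have hn : (0 : ℝ) ≤ ‖gradient (fun z => f (s, z)) (x s)‖ ^ 2 := sq_nonneg _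
    rw [hd]
    linarith
  intro s₁ hs₁
  by_contra hcon
  push_neg at hcon
  have hgs₀ : g s₀ > a - σ / 2 := h₀
  have hs₁lt : s₁ < s₀ := by
    rcases lt_or_eq_of_le hs₁ with h | h
    · exact h
    · exfalso; rw [h] at hcon; linarith
  -- last time the action was ≤ a - σ
  set S : Set ℝ := {s | s ∈ Set.Icc s₁ s₀ ∧ g s ≤ a - σ} with hS_def
  have hS_closed : IsClosed S :=
    (isClosed_Icc).inter (isClosed_le hgc continuous_const)
  have hS_ne : S.Nonempty := ⟨s₁, ⟨le_refl _, le_of_lt hs₁lt⟩, le_of_lt hcon⟩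
  have hS_bdd : BddAbove S := ⟨s₀, fun s hs => hs.1.2⟩
  set t := sSup S with ht_def
  have ht_mem : t ∈ S := hS_closed.csSup_mem hS_ne hS_bdd
  have hgt : g t ≤ a - σ := ht_mem.2
  have ht_le : t ≤ s₀ := ht_mem.1.2
  have ht_lt : t < s₀ := by
    rcases lt_or_eq_of_le ht_le with h | h
    · exact h
    · exfalso; rw [h] at hgt; linarith
  -- after t, action stays > a - σ
  have habove : ∀ s, t < s → s ≤ s₀ → a - σ < g s := by
    intro s hts hss₀
    by_contra h
    push_neg at h
    have : s ∈ S := ⟨⟨le_trans ht_mem.1.1 (le_of_lt hts), hss₀⟩, h⟩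
    exact absurd (le_csSup hS_bdd this) (not_le.mpr hts)
  -- first time after t the action reaches a - σ/2
  set T : Set ℝ := {s | s ∈ Set.Icc t s₀ ∧ a - σ / 2 ≤ g s} with hT_def
  have hT_closed : IsClosed T :=
    (isClosed_Icc).inter (isClosed_le continuous_const hgc)
  have hT_ne : T.Nonempty := ⟨s₀, ⟨ht_le, le_refl _⟩, le_of_lt hgs₀⟩
  have hT_bdd : BddBelow T := ⟨t, fun s hs => hs.1.1⟩
  set u := sInf T with hu_def
  have hu_mem : u ∈ T := hT_closed.csInf_mem hT_ne hT_bdd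
  have hgu : a - σ / 2 ≤ g u := hu_mem.2
  have htu : t < u := by
    rcases lt_or_eq_of_le hu_mem.1.1 with h | h
    · exact h
    · exfalso; rw [← h] at hgu; linarith
  have hu_le : u ≤ s₀ := hu_mem.1.2
  -- below u (and ≥ t) the action is < a - σ/2
  have hbelow : ∀ s, t ≤ s → s < u → g s < a - σ / 2 := by
    intro s hts hsu
    by_contra h
    push_neg at h
    have : s ∈ T := ⟨⟨hts, le_trans (le_of_lt hsu) hu_le⟩, h⟩
    exact absurd (csInf_le hT_bdd this) (not_le.mpr hsu)
  -- g is antitone on [t, u]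
  have hanti : AntitoneOn g (Set.Icc t u) := by
    apply antitoneOn_of_deriv_nonpos (convex_Icc t u) (hgc.continuousOn)
    · intro s hs
      exact (hgdiff s).differentiableWithinAt
    · intro s hs
      rw [interior_Icc] at hs
      have h1 : a - σ ≤ g s :=
        le_of_lt (habove s hs.1 (le_trans (le_of_lt hs.2) hu_le))
      have h2 : g s ≤ a - σ / 2 := le_of_lt (hbelow s (le_of_lt hs.1) hs.2)
      exact hderiv_nonpos s h1 h2
  have : g u ≤ g t := hanti ⟨le_refl _, le_of_lt htu⟩ ⟨le_of_lt htu, le_refl _⟩ (le_of_lt htu)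
  linarith
end

section
/- Let E be a real normed vector space, U ⊆ E an open set, and τ, f̄ : U → ℝ functions that are differentiable at every point of U, with τ(p) > 0 for all p ∈ U. Let ν : U → E be a map and c ≥ 0 a constant such that for every p ∈ U the derivative of τ at p applied to ν(p) is nonzero, and |D f̄_p(ν(p))| ≤ c·|D τ_p(ν(p))|. For ε ∈ ℝ define f_ε : U → ℝ by f_ε = (f̄ + ε)/τ. Then for every ε ∈ ℝ and every p ∈ U at which the Fréchet derivative of f_ε vanishes, one has |f_ε(p)| ≤ c. -/
/-- Bound on critical values of the perturbations `f_ε = (f̄ + ε)/τ`: if there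
is a vector field `ν` with `∂_ν τ ≠ 0` and `|∂_ν f̄| ≤ c·|∂_ν τ|` on `U`, then
every critical point `p ∈ U` of `f_ε` satisfies `|f_ε(p)| ≤ c`. -/
theorem critical_values_bounded
    {E : Type*} [NormedAddCommGroup E] [NormedSpace ℝ E]
    (U : Set E) (hU : IsOpen U)
    (τ fbar : E → ℝ)
    (hτdiff : ∀ p ∈ U, DifferentiableAt ℝ τ p)
    (hfdiff : ∀ p ∈ U, DifferentiableAt ℝ fbar p)
    (hτpos : ∀ p ∈ U, 0 < τ p)
    (ν : E → E) (c : ℝ) (hc : 0 ≤ c)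
    (hν : ∀ p ∈ U, fderiv ℝ τ p (ν p) ≠ 0)
    (hest : ∀ p ∈ U, |fderiv ℝ fbar p (ν p)| ≤ c * |fderiv ℝ τ p (ν p)|) :
    ∀ (ε : ℝ), ∀ p ∈ U,
      fderiv ℝ (fun q => (fbar q + ε) / τ q) p = 0 →
      |(fbar p + ε) / τ p| ≤ c := by
  intro ε p hp hcrit
  have hτp := hτdiff p hp
  have hfp := hfdiff p hp
  have hτne : τ p ≠ 0 := ne_of_gt (hτpos p hp)
  set g : E → ℝ := fun q => (fbar q + ε) / τ q with hg_def
  have hg : DifferentiableAt ℝ g p := by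
    simp only [hg_def, div_eq_mul_inv]
    exact (hfp.add_const ε).mul (hτp.inv hτne)
  -- g q * τ q = fbar q + ε near p
  have hEq : (fun q => g q * τ q) =ᶠ[nhds p] fun q => fbar q + ε := by
    filter_upwards [hU.mem_nhds hp] with q hq
    exact div_mul_cancel₀ _ (ne_of_gt (hτpos q hq))
  have h1 : fderiv ℝ (fun q => g q * τ q) p = fderiv ℝ (fun q => fbar q + ε) p :=
    Filter.EventuallyEq.fderiv_eq hEq
  rw [fderiv_fun_mul hg hτp, hcrit, fderiv_add_const] at h1
  have h2 : g p * fderiv ℝ τ p (ν p) = fderiv ℝ fbar p (ν p) := by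
    have := congrArg (fun L : E →L[ℝ] ℝ => L (ν p)) h1
    simpa using this
  have h3 : |g p| * |fderiv ℝ τ p (ν p)| ≤ c * |fderiv ℝ τ p (ν p)| := by
    rw [← abs_mul, h2]; exact hest p hp
  have hpos : 0 < |fderiv ℝ τ p (ν p)| := abs_pos.mpr (hν p hp)
  exact le_of_mul_le_mul_right h3 hpos
end
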